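/- Let s, D, n be positive integers with s odd, s ≥ 3D, and Dn even, and let a_{i,k} (1 ≤ i ≤ s, 0 ≤ k ≤ n) be rational numbers such that R_n(t) = Σ_{i=1}^{s} Σ_{k=0}^{n} a_{i,k}/(t+k)^i for every real t ∉ {0, -1, …, -n}. Then for every i with 3 ≤ i ≤ s, the rational number d_n^{s+1-i} · Σ_{k=0}^{n} a_{i,k} is an integer, where d_n = lcm(1, 2, …, n). -/

import Mathlib

/-- The rational function `R_n(t)` of Fischler–Sprang–Zudilin (depending on `s` and `D`). -/
noncomputable def R (s D n : ℕ) (t : ℝ) : ℝ :=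
  (D : ℝ) ^ (3 * D * n) * (n.factorial : ℝ) ^ (s + 1 - 3 * D) *
    (∏ j ∈ Finset.range (3 * D * n + 1), (t - n + (j : ℝ) / D)) /
    (∏ j ∈ Finset.range (n + 1), (t + j)) ^ (s + 1)

/-- `d_m = lcm(1, 2, …, m)`. -/
def dd (m : ℕ) : ℕ := (Finset.Icc 1 m).lcm id

open Polynomial Finset Nat

namespace FSZ

noncomputable section

/-- A power series over ℚ is `n`-good if `dd n ^ m` times its `m`-th coefficient is
an integer for every `m`. -/
def good (n : ℕ) (f : PowerSeries ℚ) : Prop :=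
  ∀ m : ℕ, ∃ z : ℤ, (dd n : ℚ) ^ m * PowerSeries.coeff m f = (z : ℚ)

lemma good.mul {n : ℕ} {f g : PowerSeries ℚ} (hf : good n f) (hg : good n g) :
    good n (f * g) := by
  intro m
  choose zf hzf using hf
  choose zg hzg using hg
  refine ⟨∑ p ∈ Finset.HasAntidiagonal.antidiagonal m, zf p.1 * zg p.2, ?_⟩
  rw [PowerSeries.coeff_mul, Finset.mul_sum]
  push_cast
  refine Finset.sum_congr rfl fun p hp => ?_
  have hpm : p.1 + p.2 = m := Finset.HasAntidiagonal.mem_antidiagonal.mp hp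
  rw [← hzf p.1, ← hzg p.2, ← hpm, pow_add]
  ring

lemma good.one {n : ℕ} : good n 1 := by
  intro m
  rcases Nat.eq_zero_or_pos m with h | h
  · exact ⟨1, by simp [h]⟩
  · exact ⟨0, by simp [PowerSeries.coeff_one, Nat.pos_iff_ne_zero.mp h]⟩

lemma good.prod {n : ℕ} {ι : Type*} (t : Finset ι) (F : ι → PowerSeries ℚ)
    (h : ∀ i ∈ t, good n (F i)) : good n (∏ i ∈ t, F i) := by
  classical
  induction t using Finset.induction_on with
  | empty => simpa using good.one
  | @insert x t' hx ih =>
      rw [Finset.prod_insert hx]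
      exact (h x (Finset.mem_insert_self x t')).mul
        (ih fun i hi => h i (Finset.mem_insert_of_mem hi))

lemma good.pow {n : ℕ} {f : PowerSeries ℚ} (hf : good n f) (e : ℕ) : good n (f ^ e) := by
  induction e with
  | zero => simpa using good.one
  | succ e ih => rw [pow_succ]; exact ih.mul hf

lemma good.add {n : ℕ} {f g : PowerSeries ℚ} (hf : good n f) (hg : good n g) :
    good n (f + g) := by
  intro m
  obtain ⟨zf, hzf⟩ := hf m
  obtain ⟨zg, hzg⟩ := hg m
  exact ⟨zf + zg, by rw [map_add, mul_add, hzf, hzg]; push_cast; ring⟩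

lemma good.sum {n : ℕ} {ι : Type*} (t : Finset ι) (F : ι → PowerSeries ℚ)
    (h : ∀ i ∈ t, good n (F i)) : good n (∑ i ∈ t, F i) := by
  classical
  induction t using Finset.induction_on with
  | empty =>
      intro m; exact ⟨0, by simp⟩
  | @insert x t' hx ih =>
      rw [Finset.sum_insert hx]
      exact (h x (Finset.mem_insert_self x t')).add
        (ih fun i hi => h i (Finset.mem_insert_of_mem hi))

lemma good.C {n : ℕ} (z : ℤ) : good n (PowerSeries.C (z : ℚ)) := by
  intro m
  rcases Nat.eq_zero_or_pos m with h | h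
  · exact ⟨z, by simp [h]⟩
  · refine ⟨0, ?_⟩
    rw [PowerSeries.coeff_C, if_neg (Nat.pos_iff_ne_zero.mp h)]
    simp

/-- integer polynomials give good power series -/
lemma good.intPoly {n : ℕ} (p : Polynomial ℤ) :
    good n ((p.map (Int.castRingHom ℚ) : Polynomial ℚ) : PowerSeries ℚ) := by
  intro m
  refine ⟨p.coeff m * (dd n) ^ m, ?_⟩
  rw [Polynomial.coeff_coe, Polynomial.coeff_map]
  show (dd n : ℚ) ^ m * ((p.coeff m : ℤ) : ℚ) = _
  push_cast
  ring

/-- the normalized inverse `e * (X + e)⁻¹` as an explicit power series. -/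
def inv1 (e : ℚ) : PowerSeries ℚ := PowerSeries.mk fun m => (-1) ^ m * (e⁻¹) ^ m

lemma inv1_mul_X_add (e : ℚ) (he : e ≠ 0) :
    ((Polynomial.X + Polynomial.C e : Polynomial ℚ) : PowerSeries ℚ) * inv1 e
      = PowerSeries.C e := by
  ext m
  rw [Polynomial.coe_add, Polynomial.coe_C, Polynomial.coe_X, add_mul]
  cases m with
  | zero => simp [inv1]
  | succ m =>
      rw [map_add, PowerSeries.coeff_succ_X_mul, PowerSeries.coeff_C_mul]
      simp only [inv1, PowerSeries.coeff_mk, PowerSeries.coeff_C, Nat.succ_ne_zero, if_false]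
      rw [pow_succ, pow_succ]
      field_simp
      ring

lemma good_inv1 {n : ℕ} (e : ℤ) (he : e ≠ 0) (hdvd : e ∣ (dd n : ℤ)) :
    good n (inv1 (e : ℚ)) := by
  intro m
  obtain ⟨q, hq⟩ := hdvd
  refine ⟨(-q) ^ m, ?_⟩
  have he' : (e : ℚ) ≠ 0 := Int.cast_ne_zero.mpr he
  have hddq : ((dd n : ℚ)) = (e : ℚ) * (q : ℚ) := by exact_mod_cast hq
  have this : ((dd n : ℚ)) * (e : ℚ)⁻¹ = (q : ℚ) := by
    rw [hddq]; field_simp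
  unfold inv1
  rw [PowerSeries.coeff_mk]
  calc (dd n : ℚ) ^ m * ((-1) ^ m * (e⁻¹ : ℚ) ^ m)
      = ((-1) * ((dd n : ℚ) * (e : ℚ)⁻¹)) ^ m := by ring
    _ = ((-q : ℚ)) ^ m := by rw [this]; ring
    _ = (((-q) ^ m : ℤ) : ℚ) := by push_cast; ring


lemma dvd_dd {n j k : ℕ} (hj : j ≤ n) (hk : k ≤ n) (hjk : j ≠ k) :
    ((j : ℤ) - k) ∣ (dd n : ℤ) := by
  have h1 : ((j:ℤ) - k).natAbs ∣ dd n := by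
    have hmem : ((j:ℤ) - k).natAbs ∈ Finset.Icc 1 n := by
      simp only [Finset.mem_Icc]
      omega
    exact Finset.dvd_lcm (f := (id : ℕ → ℕ)) hmem
  exact Int.natAbs_dvd.mp (Int.ofNat_dvd.mpr h1)

lemma cast_asc (m N : ℕ) : ∏ r ∈ range N, ((m:ℤ) + r) = (m.ascFactorial N : ℤ) := by
  induction N with
  | zero => simp
  | succ N ih => rw [Finset.prod_range_succ, ih, Nat.ascFactorial_succ]; push_cast; ring

lemma cast_desc (m N : ℕ) (h : N ≤ m) : ∏ r ∈ range N, ((m:ℤ) - r) = (m.descFactorial N : ℤ) := by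
  induction N with
  | zero => simp
  | succ N ih =>
      have hN : N ≤ m := le_of_lt (Nat.lt_of_succ_le h)
      rw [Finset.prod_range_succ, ih hN, Nat.descFactorial_succ]
      have hc : ((m - N : ℕ) : ℤ) = (m:ℤ) - N := by omega
      push_cast [hc]
      ring

lemma factorial_dvd_consec (n : ℕ) (c : ℤ) : (n ! : ℤ) ∣ ∏ r ∈ range n, (c + r) := by
  rcases lt_or_ge 0 c with hc | hc
  · have hc' : ∀ r ∈ range n, c + (r:ℤ) = ((c.toNat:ℤ) + r) := fun r _ => by omega
    rw [Finset.prod_congr rfl hc', cast_asc]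
    exact Int.ofNat_dvd.mpr (Nat.factorial_dvd_ascFactorial _ _)
  · rcases lt_or_ge (-c) (n : ℤ) with hcn | hcn
    · have hr : (-c).toNat ∈ range n := by simp only [Finset.mem_range]; omega
      rw [Finset.prod_eq_zero hr (by omega)]
      exact dvd_zero _
    · set m := (-c).toNat with hm
      have hnm : n ≤ m := by omega
      have hcm : ∀ r ∈ range n, c + (r:ℤ) = (-1) * ((m:ℤ) - r) := fun r _ => by omega
      rw [Finset.prod_congr rfl hcm, Finset.prod_mul_distrib, Finset.prod_const,
        Finset.card_range, cast_desc m n hnm]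
      exact Dvd.dvd.mul_left (Int.ofNat_dvd.mpr (Nat.factorial_dvd_descFactorial _ _)) _

lemma prod_range_cast_sub (j : ℕ) : ∏ l ∈ range j, ((l:ℤ) - j) = (-1)^j * j ! := by
  have h : ∀ l ∈ range j, (l:ℤ) - j = (-1) * ((j:ℤ) - l) := fun l _ => by ring
  rw [Finset.prod_congr rfl h, Finset.prod_mul_distrib, Finset.prod_const, Finset.card_range,
    cast_desc j j le_rfl, Nat.descFactorial_self]

lemma prod_Ico_cast_sub (j n : ℕ) (h : j ≤ n) :
    ∏ l ∈ Finset.Ico (j+1) (n+1), ((l:ℤ) - j) = ((n - j)! : ℤ) := by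
  rw [Finset.prod_Ico_eq_prod_range]
  have h1 : n + 1 - (j + 1) = n - j := by omega
  rw [h1]
  have h2 : ∀ r ∈ range (n - j), ((j + 1 + r : ℕ) : ℤ) - j = ((1:ℕ):ℤ) + r := fun r _ => by
    push_cast; ring
  rw [Finset.prod_congr rfl h2, cast_asc, Nat.one_ascFactorial]

lemma erase_eq_union (n j : ℕ) (hj : j ≤ n) :
    (range (n+1)).erase j = range j ∪ Finset.Ico (j+1) (n+1) := by
  ext x
  simp only [Finset.mem_erase, Finset.mem_range, Finset.mem_union, Finset.mem_Ico]
  omega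

lemma CL1 (n j : ℕ) (hj : j ≤ n) :
    ∏ l ∈ (range (n+1)).erase j, ((l:ℤ) - j) = (-1)^j * j ! * ((n-j)! : ℤ) := by
  rw [erase_eq_union n j hj, Finset.prod_union (by
    rw [Finset.disjoint_left]
    intro x hx hx'
    simp only [Finset.mem_range] at hx
    simp only [Finset.mem_Ico] at hx'
    omega)]
  rw [prod_range_cast_sub, prod_Ico_cast_sub j n hj]

lemma prod_blocks {M : Type*} [CommMonoid M] (f : ℕ → M) (B N : ℕ) :
    ∏ j ∈ range (B * N), f j = ∏ b ∈ range B, ∏ r ∈ range N, f (b * N + r) := by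
  induction B with
  | zero => simp
  | succ B ih =>
      rw [Nat.succ_mul, Finset.prod_range_add, ih, Finset.prod_range_succ]


section LemmaA

lemma mem_Jset {n k j : ℕ} : j ∈ (range (n+1)).erase k ↔ j ≠ k ∧ j ≤ n := by
  simp only [Finset.mem_erase, Finset.mem_range]
  omega

lemma cast_sub_ne {j k : ℕ} (h : j ≠ k) : ((j:ℚ) - k) ≠ 0 := by
  intro hc
  apply h
  exact_mod_cast sub_eq_zero.mp hc

lemma cast_sub_ne' {j k : ℕ} (h : j ≠ k) : ((j:ℚ) - k) ≠ 0 := cast_sub_ne h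


lemma coe_prod_ps {ι : Type*} (t : Finset ι) (f : ι → Polynomial ℚ) :
    ((∏ i ∈ t, f i : Polynomial ℚ) : PowerSeries ℚ)
      = ∏ i ∈ t, ((f i : Polynomial ℚ) : PowerSeries ℚ) := by
  rw [← Polynomial.coeToPowerSeries.ringHom_apply, map_prod]
  simp [Polynomial.coeToPowerSeries.ringHom_apply]

lemma coe_sum_ps {ι : Type*} (t : Finset ι) (f : ι → Polynomial ℚ) :
    ((∑ i ∈ t, f i : Polynomial ℚ) : PowerSeries ℚ)
      = ∑ i ∈ t, ((f i : Polynomial ℚ) : PowerSeries ℚ) := by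
  rw [← Polynomial.coeToPowerSeries.ringHom_apply, map_sum]
  simp [Polynomial.coeToPowerSeries.ringHom_apply]

/-- The key local lemma: if `P` is an integer polynomial all of whose values at the
points `k - j`, `j ∈ J`, are divisible by `n!`, then
`γ⁻¹ * P * ∏_{j ∈ J} inv1 (j - k)` is a good power series. -/
lemma lemmaA (n k : ℕ) (hn : 0 < n) (hk : k ≤ n) (P : Polynomial ℤ)
    (hP : ∀ j ∈ (range (n+1)).erase k, (n ! : ℤ) ∣ P.eval ((k:ℤ) - j)) :
    good n (PowerSeries.C (∏ j ∈ (range (n+1)).erase k, ((j:ℚ) - k))⁻¹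
      * ((P.map (Int.castRingHom ℚ) : Polynomial ℚ) : PowerSeries ℚ)
      * ∏ j ∈ (range (n+1)).erase k, inv1 ((j:ℚ) - k)) := by
  classical
  set J : Finset ℕ := (range (n+1)).erase k with hJ
  set ic : ℤ →+* ℚ := Int.castRingHom ℚ with hic
  set Pq : Polynomial ℚ := P.map ic with hPq
  set Nz : Polynomial ℤ := ∏ j ∈ J, (X + C ((j:ℤ) - k)) with hNz
  set Nq : Polynomial ℚ := ∏ j ∈ J, (X + C ((j:ℚ) - k)) with hNq
  set γ : ℚ := ∏ j ∈ J, ((j:ℚ) - k) with hγ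
  have hNzm : Nz.Monic := monic_prod_of_monic _ _ fun j _ => monic_X_add_C _
  have hNmap : Nz.map ic = Nq := by
    rw [hNz, hNq, Polynomial.map_prod]
    refine Finset.prod_congr rfl fun j _ => ?_
    simp only [Polynomial.map_add, Polynomial.map_X, Polynomial.map_C]
    norm_num [hic]
  have hNqm : Nq.Monic := by rw [← hNmap]; exact hNzm.map ic
  have hJcard : J.card = n := by
    rw [hJ, Finset.card_erase_of_mem (by simp only [Finset.mem_range]; omega), Finset.card_range]
    omega
  have hjne : ∀ j ∈ J, ((j:ℚ) - k) ≠ 0 := fun j hj => cast_sub_ne (mem_Jset.mp hj).1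
  have hγne : γ ≠ 0 := Finset.prod_ne_zero_iff.mpr hjne
  -- the coefficients of the partial fraction decomposition
  set c : ℕ → ℚ := fun j => Pq.eval ((k:ℚ) - j) / ∏ l ∈ J.erase j, ((l:ℚ) - j) with hc
  have hdenne : ∀ j ∈ J, (∏ l ∈ J.erase j, ((l:ℚ) - j)) ≠ 0 := by
    intro j hj
    refine Finset.prod_ne_zero_iff.mpr fun l hl => cast_sub_ne (Finset.mem_erase.mp hl).1
  -- Step 1 : the interpolation identity for the remainder
  have hNdeg : Nq.degree = (n : WithBot ℕ) := by
    rw [hNq, Polynomial.degree_prod]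
    simp only [Polynomial.degree_X_add_C]
    rw [Finset.sum_const, hJcard]
    simp
  have hrho : Pq %ₘ Nq = ∑ j ∈ J, C (c j) * ∏ l ∈ J.erase j, (X + C ((l:ℚ) - k)) := by
    have hinj : Set.InjOn (fun j : ℕ => (k:ℚ) - j) J := by
      intro a _ b _ hab
      dsimp at hab
      have : (a:ℚ) = (b:ℚ) := by linarith
      exact_mod_cast this
    have hscard : (J.image (fun j : ℕ => (k:ℚ) - j)).card = n := by
      rw [Finset.card_image_of_injOn hinj, hJcard]
    apply Polynomial.eq_of_degrees_lt_of_eval_finset_eq (J.image (fun j : ℕ => (k:ℚ) - j))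
    · rw [hscard]
      calc (Pq %ₘ Nq).degree < Nq.degree := Polynomial.degree_modByMonic_lt _ hNqm
        _ = (n : WithBot ℕ) := hNdeg
    · rw [hscard]
      refine lt_of_le_of_lt (Polynomial.degree_sum_le _ _) ?_
      rw [Finset.sup_lt_iff (by exact_mod_cast WithBot.bot_lt_coe n)]
      intro j hj
      refine lt_of_le_of_lt (Polynomial.degree_mul_le _ _) ?_
      have hprod : (∏ l ∈ J.erase j, (X + C ((l:ℚ) - k))).degree = ((n-1 : ℕ) : WithBot ℕ) := by
        rw [Polynomial.degree_prod]
        simp only [Polynomial.degree_X_add_C]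
        rw [Finset.sum_const, Finset.card_erase_of_mem hj, hJcard]
        simp
      calc (C (c j)).degree + (∏ l ∈ J.erase j, (X + C ((l:ℚ) - k))).degree
          ≤ 0 + ((n-1 : ℕ) : WithBot ℕ) := add_le_add Polynomial.degree_C_le (le_of_eq hprod)
        _ = ((n-1 : ℕ) : WithBot ℕ) := zero_add _
        _ < (n : WithBot ℕ) := by exact_mod_cast Nat.sub_lt hn one_pos
    · intro x hx
      obtain ⟨j0, hj0, rfl⟩ := Finset.mem_image.mp hx
      have hevalN : Nq.eval ((k:ℚ) - j0) = 0 := by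
        rw [hNq, Polynomial.eval_prod]
        refine Finset.prod_eq_zero hj0 ?_
        simp only [Polynomial.eval_add, Polynomial.eval_X, Polynomial.eval_C]
        ring
      have hL : (Pq %ₘ Nq).eval ((k:ℚ) - j0) = Pq.eval ((k:ℚ) - j0) := by
        rw [Polynomial.modByMonic_eq_sub_mul_div Pq Nq, Polynomial.eval_sub,
          Polynomial.eval_mul, hevalN, zero_mul, sub_zero]
      rw [hL, Polynomial.eval_finset_sum]
      rw [Finset.sum_eq_single j0 ?side1 ?side2]
      · rw [Polynomial.eval_mul, Polynomial.eval_C, Polynomial.eval_prod]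
        have : ∀ l ∈ J.erase j0,
            (X + C ((l:ℚ) - k)).eval ((k:ℚ) - j0) = ((l:ℚ) - j0) := by
          intro l _
          simp only [Polynomial.eval_add, Polynomial.eval_X, Polynomial.eval_C]
          ring
        rw [Finset.prod_congr rfl this, hc]
        dsimp only
        exact (div_mul_cancel₀ _ (hdenne j0 hj0)).symm
      case side1 =>
        intro j hjJ hjne0
        rw [Polynomial.eval_mul, Polynomial.eval_prod]
        have hj0mem : j0 ∈ J.erase j := Finset.mem_erase.mpr ⟨fun hcon => hjne0 hcon.symm, hj0⟩
        refine mul_eq_zero_of_right _ (Finset.prod_eq_zero hj0mem ?_)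
        simp only [Polynomial.eval_add, Polynomial.eval_X, Polynomial.eval_C]
        ring
      case side2 =>
        intro hcon
        exact absurd hj0 hcon
  -- Step 2 : power series decomposition
  have hNP : ((Nq : Polynomial ℚ) : PowerSeries ℚ) * (∏ j ∈ J, inv1 ((j:ℚ) - k))
      = PowerSeries.C γ := by
    rw [hNq, coe_prod_ps, ← Finset.prod_mul_distrib]
    rw [Finset.prod_congr rfl fun j hj => inv1_mul_X_add _ (hjne j hj)]
    rw [← map_prod (PowerSeries.C) _ J]
  have hkey : PowerSeries.C γ⁻¹ * ((Pq : Polynomial ℚ) : PowerSeries ℚ)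
        * ∏ j ∈ J, inv1 ((j:ℚ) - k)
      = (((Pq /ₘ Nq : Polynomial ℚ)) : PowerSeries ℚ)
        + ∑ j ∈ J, PowerSeries.C (c j / ((j:ℚ) - k)) * inv1 ((j:ℚ) - k) := by
    have hdiv : Pq = Pq %ₘ Nq + Nq * (Pq /ₘ Nq) := (Polynomial.modByMonic_add_div Pq Nq).symm
    have hstep : ((Pq : Polynomial ℚ) : PowerSeries ℚ)
        = ((Pq %ₘ Nq : Polynomial ℚ) : PowerSeries ℚ)
          + ((Nq : Polynomial ℚ) : PowerSeries ℚ) * ((Pq /ₘ Nq : Polynomial ℚ) : PowerSeries ℚ) := by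
      rw [← Polynomial.coe_mul, ← Polynomial.coe_add, ← hdiv]
    rw [hstep, mul_add, add_mul]
    have h1 : PowerSeries.C γ⁻¹ * (((Nq:Polynomial ℚ):PowerSeries ℚ) * ((Pq /ₘ Nq : Polynomial ℚ):PowerSeries ℚ)) * ∏ j ∈ J, inv1 ((j:ℚ) - k)
        = ((Pq /ₘ Nq : Polynomial ℚ):PowerSeries ℚ) := by
      rw [show PowerSeries.C γ⁻¹ * (((Nq:Polynomial ℚ):PowerSeries ℚ) * ((Pq /ₘ Nq : Polynomial ℚ):PowerSeries ℚ)) * ∏ j ∈ J, inv1 ((j:ℚ) - k)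
          = PowerSeries.C γ⁻¹ * (((Nq:Polynomial ℚ):PowerSeries ℚ) * ∏ j ∈ J, inv1 ((j:ℚ) - k)) * ((Pq /ₘ Nq : Polynomial ℚ):PowerSeries ℚ) by ring]
      rw [hNP, ← map_mul, inv_mul_cancel₀ hγne, map_one, one_mul]
    have h2 : PowerSeries.C γ⁻¹ * ((Pq %ₘ Nq : Polynomial ℚ):PowerSeries ℚ) * ∏ j ∈ J, inv1 ((j:ℚ) - k)
        = ∑ j ∈ J, PowerSeries.C (c j / ((j:ℚ) - k)) * inv1 ((j:ℚ) - k) := by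
      rw [hrho, coe_sum_ps, Finset.mul_sum, Finset.sum_mul]
      refine Finset.sum_congr rfl fun j hj => ?_
      rw [Polynomial.coe_mul, Polynomial.coe_C, coe_prod_ps]
      have hsplitPi : (∏ l ∈ J, inv1 ((l:ℚ) - k))
          = inv1 ((j:ℚ) - k) * ∏ l ∈ J.erase j, inv1 ((l:ℚ) - k) :=
        (Finset.mul_prod_erase J _ hj).symm
      have hcancel : (∏ l ∈ J.erase j, ((X + C ((l:ℚ) - k) : Polynomial ℚ) : PowerSeries ℚ))
            * ∏ l ∈ J.erase j, inv1 ((l:ℚ) - k)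
          = PowerSeries.C (∏ l ∈ J.erase j, ((l:ℚ) - k)) := by
        rw [← Finset.prod_mul_distrib,
          Finset.prod_congr rfl fun l hl => inv1_mul_X_add _ (hjne l (Finset.mem_of_mem_erase hl)),
          ← map_prod (PowerSeries.C) _ _]
      have hval : γ⁻¹ * (c j * ∏ l ∈ J.erase j, ((l:ℚ) - k)) = c j / ((j:ℚ) - k) := by
        have hsplit : γ = ((j:ℚ) - k) * ∏ l ∈ J.erase j, ((l:ℚ) - k) :=
          (Finset.mul_prod_erase J _ hj).symm
        have hprodne : (∏ l ∈ J.erase j, ((l:ℚ) - k)) ≠ 0 :=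
          Finset.prod_ne_zero_iff.mpr fun l hl => hjne l (Finset.mem_of_mem_erase hl)
        rw [hsplit, mul_inv, div_eq_mul_inv]
        calc (((j:ℚ)-k)⁻¹ * (∏ l ∈ J.erase j, ((l:ℚ) - k))⁻¹) * (c j * ∏ l ∈ J.erase j, ((l:ℚ) - k))
            = c j * ((j:ℚ)-k)⁻¹ * ((∏ l ∈ J.erase j, ((l:ℚ) - k))⁻¹ * ∏ l ∈ J.erase j, ((l:ℚ) - k)) := by
              ring
          _ = c j * ((j:ℚ)-k)⁻¹ := by rw [inv_mul_cancel₀ hprodne, mul_one]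
      calc PowerSeries.C γ⁻¹ * (PowerSeries.C (c j)
              * ∏ l ∈ J.erase j, ((X + C ((l:ℚ) - k) : Polynomial ℚ) : PowerSeries ℚ))
            * ∏ l ∈ J, inv1 ((l:ℚ) - k)
          = PowerSeries.C γ⁻¹ * PowerSeries.C (c j)
            * ((∏ l ∈ J.erase j, ((X + C ((l:ℚ) - k) : Polynomial ℚ) : PowerSeries ℚ))
              * ∏ l ∈ J.erase j, inv1 ((l:ℚ) - k)) * inv1 ((j:ℚ) - k) := by
            rw [hsplitPi]; ring
        _ = PowerSeries.C (γ⁻¹ * (c j * ∏ l ∈ J.erase j, ((l:ℚ) - k))) * inv1 ((j:ℚ) - k) := by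
            rw [hcancel, ← map_mul, ← map_mul, mul_assoc]
        _ = PowerSeries.C (c j / ((j:ℚ) - k)) * inv1 ((j:ℚ) - k) := by rw [hval]
    rw [h1, h2, add_comm]
  -- Step 3 : integrality of the coefficients
  have hcint : ∀ j ∈ J, ∃ z : ℤ, c j / ((j:ℚ) - k) = (z : ℚ) := by
    intro j hj
    obtain ⟨hjk, hjn⟩ := mem_Jset.mp hj
    obtain ⟨w, hw⟩ := hP j hj
    refine ⟨-(-1:ℤ)^j * w * (n.choose j), ?_⟩
    have hDjne := hdenne j hj
    have hjkq : ((j:ℚ) - k) ≠ 0 := hjne j hj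
    have hkmem : k ∈ (range (n+1)).erase j := by
      simp only [Finset.mem_erase, Finset.mem_range]
      omega
    have hcomm : J.erase j = ((range (n+1)).erase j).erase k := by
      rw [hJ, Finset.erase_right_comm]
    have hF1 : (∏ l ∈ J.erase j, ((l:ℚ) - j)) * ((k:ℚ) - j)
        = ((((-1:ℤ))^j * (j ! : ℤ) * (((n-j) ! : ℕ) : ℤ) : ℤ) : ℚ) := by
      rw [hcomm, Finset.prod_erase_mul _ _ hkmem]
      calc ∏ l ∈ (range (n+1)).erase j, ((l:ℚ) - j)
          = ((∏ l ∈ (range (n+1)).erase j, ((l:ℤ) - j) : ℤ) : ℚ) := by push_cast; rfl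
        _ = _ := by rw [CL1 n j hjn]
    have hF2 : Pq.eval ((k:ℚ) - j) = (((n ! : ℤ) * w : ℤ) : ℚ) := by
      have hpt : ((k:ℚ) - j) = ic ((k:ℤ) - j) := by
        simp [hic]
      rw [hPq, hpt, Polynomial.eval_map, Polynomial.eval₂_at_apply, hw]
      simp [hic]
    have hch : (n.choose j : ℤ) * (j ! : ℤ) * (((n-j) ! : ℕ) : ℤ) = (n ! : ℤ) := by
      exact_mod_cast Nat.choose_mul_factorial_mul_factorial hjn
    have hsq : ((-1:ℤ)^j) * ((-1:ℤ)^j) = 1 := by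
      rw [← mul_pow]
      norm_num
    have hzint : (n ! : ℤ) * w
        = (-(-1:ℤ)^j * w * (n.choose j)) * (-(((-1:ℤ))^j * (j ! : ℤ) * (((n-j) ! : ℕ) : ℤ))) := by
      calc (n ! : ℤ) * w
          = w * ((n.choose j : ℤ) * (j ! : ℤ) * (((n-j) ! : ℕ) : ℤ)) * 1 := by rw [hch]; ring
        _ = w * ((n.choose j : ℤ) * (j ! : ℤ) * (((n-j) ! : ℕ) : ℤ))
              * (((-1:ℤ)^j) * ((-1:ℤ)^j)) := by rw [hsq]
        _ = _ := by ring
    rw [hc]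
    dsimp only
    rw [div_div, div_eq_iff (mul_ne_zero hDjne hjkq)]
    rw [show (∏ l ∈ J.erase j, ((l:ℚ) - j)) * ((j:ℚ) - k)
        = -((∏ l ∈ J.erase j, ((l:ℚ) - j)) * ((k:ℚ) - j)) by ring]
    rw [hF1, hF2]
    exact_mod_cast hzint
  -- assemble
  rw [hkey]
  refine good.add ?_ (good.sum _ _ fun j hj => ?_)
  · have : Pq /ₘ Nq = (P /ₘ Nz).map ic := by
      rw [Polynomial.map_divByMonic ic hNzm, hNmap]
    rw [this]
    exact good.intPoly _
  · obtain ⟨z, hz⟩ := hcint j hj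
    rw [hz]
    have hjk := (mem_Jset.mp hj).1
    have hjn := (mem_Jset.mp hj).2
    have : ((j:ℚ) - k) = (((j:ℤ) - k : ℤ) : ℚ) := by push_cast; ring
    rw [this]
    exact (good.C z).mul (good_inv1 _ (by omega) (dvd_dd hjn hk hjk))

end LemmaA


section Transfer

/-- The factorization of the numerator polynomial into integer blocks. -/
lemma fact_identity (s D n : ℕ) (hD : 0 < D) :
    (C ((D:ℚ)^(3*D*n) * ((n ! : ℕ):ℚ)^(s+1-3*D)) *
        ∏ j ∈ range (3*D*n+1), (X + C ((j:ℚ)/(D:ℚ) - (n:ℚ))) : Polynomial ℚ)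
      = C (((n ! : ℕ):ℚ)^(s+1-3*D)) * (X + C (((2*n : ℕ):ℚ))) *
          ∏ b ∈ range (3*D), ∏ r ∈ range n,
            (C (D:ℚ) * X + C (((b*n+r : ℕ):ℚ) - ((D*n : ℕ):ℚ))) := by
  have hDq : (D:ℚ) ≠ 0 := by positivity
  rw [Finset.prod_range_succ]
  have hlast : (X + C (((3*D*n : ℕ):ℚ)/(D:ℚ) - (n:ℚ)) : Polynomial ℚ)
      = X + C (((2*n : ℕ):ℚ)) := by
    have hc : ((3*D*n : ℕ):ℚ)/(D:ℚ) - (n:ℚ) = ((2*n : ℕ):ℚ) := by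
      push_cast
      field_simp
      ring
    rw [hc]
  have hmain : Polynomial.C ((D:ℚ)^(3*D*n)) * ∏ j ∈ range (3*D*n), (X + C ((j:ℚ)/(D:ℚ) - (n:ℚ)))
      = ∏ b ∈ range (3*D), ∏ r ∈ range n,
          (C (D:ℚ) * X + C (((b*n+r : ℕ):ℚ) - ((D*n : ℕ):ℚ))) := by
    rw [show ((D:ℚ)^(3*D*n)) = ∏ _j ∈ range (3*D*n), (D:ℚ) by
      rw [Finset.prod_const, Finset.card_range], map_prod, ← Finset.prod_mul_distrib]
    rw [← prod_blocks (fun j => C (D:ℚ) * X + C ((j:ℚ) - ((D*n : ℕ):ℚ))) (3*D) n]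
    refine Finset.prod_congr rfl fun j _ => ?_
    rw [mul_add, ← Polynomial.C_mul]
    congr 2
    push_cast
    field_simp
  calc C ((D:ℚ)^(3*D*n) * ((n ! : ℕ):ℚ)^(s+1-3*D)) *
        ((∏ j ∈ range (3*D*n), (X + C ((j:ℚ)/(D:ℚ) - (n:ℚ)))) *
          (X + C (((3*D*n : ℕ):ℚ)/(D:ℚ) - (n:ℚ))))
      = C (((n ! : ℕ):ℚ)^(s+1-3*D)) * (X + C (((3*D*n : ℕ):ℚ)/(D:ℚ) - (n:ℚ))) *
          (C ((D:ℚ)^(3*D*n)) * ∏ j ∈ range (3*D*n), (X + C ((j:ℚ)/(D:ℚ) - (n:ℚ)))) := by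
        rw [Polynomial.C_mul]
        push_cast
        ring
    _ = _ := by rw [hmain, hlast]

/-- Transfer of the real partial fraction identity to an identity of rational polynomials. -/
lemma main_identity (s D n : ℕ) (hD : 0 < D) (hn : 0 < n) (a : ℕ → ℕ → ℚ)
    (ha : ∀ t : ℝ, (∀ k : ℕ, k ≤ n → t ≠ -(k : ℝ)) →
      R s D n t = ∑ i ∈ Finset.Icc 1 s, ∑ k ∈ Finset.range (n + 1), (a i k : ℝ) / (t + k) ^ i) :
    (C ((D:ℚ)^(3*D*n) * ((n ! : ℕ):ℚ)^(s+1-3*D)) *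
        ∏ j ∈ range (3*D*n+1), (X + C ((j:ℚ)/(D:ℚ) - (n:ℚ))) : Polynomial ℚ)
      = ∑ i ∈ Finset.Icc 1 s, ∑ k ∈ range (n+1),
          C (a i k) * (X + C ((k:ℚ)))^(s+1-i) *
            (∏ j ∈ (range (n+1)).erase k, (X + C ((j:ℚ))))^(s+1) := by
  apply Polynomial.map_injective (algebraMap ℚ ℝ) (algebraMap ℚ ℝ).injective
  apply Polynomial.eq_of_infinite_eval_eq
  have hfin : ({x : ℝ | ∃ k : ℕ, k ≤ n ∧ x = -(k:ℝ)}).Finite := by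
    refine ((Set.finite_Iic n).image (fun k : ℕ => -(k:ℝ))).subset ?_
    rintro x ⟨k, hk, rfl⟩
    exact ⟨k, hk, rfl⟩
  refine hfin.infinite_compl.mono ?_
  intro x hx
  have hx' : ∀ k : ℕ, k ≤ n → x ≠ -(k:ℝ) := by
    intro k hk hcon
    exact hx ⟨k, hk, hcon⟩
  have hden1 : ∀ j ∈ range (n+1), x + (j:ℝ) ≠ 0 := by
    intro j hj h0
    exact hx' j (by simpa [Nat.lt_succ_iff] using Finset.mem_range.mp hj) (by linarith)
  have hDen : (∏ j ∈ range (n+1), (x + (j:ℝ))) ≠ 0 := Finset.prod_ne_zero_iff.mpr hden1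
  have hmain := ha x hx'
  rw [R] at hmain
  rw [div_eq_iff (pow_ne_zero _ hDen)] at hmain
  show Polynomial.eval x _ = Polynomial.eval x _
  have hevalL : Polynomial.eval x ((C ((D:ℚ)^(3*D*n) * ((n ! : ℕ):ℚ)^(s+1-3*D)) *
        ∏ j ∈ range (3*D*n+1), (X + C ((j:ℚ)/(D:ℚ) - (n:ℚ))) : Polynomial ℚ).map (algebraMap ℚ ℝ))
      = (D:ℝ)^(3*D*n) * (n ! : ℝ)^(s+1-3*D) * ∏ j ∈ range (3*D*n+1), (x - n + (j:ℝ)/D) := by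
    simp only [Polynomial.map_mul, Polynomial.map_C, Polynomial.map_prod, Polynomial.map_add,
      Polynomial.map_X, Polynomial.eval_mul, Polynomial.eval_C, Polynomial.eval_prod,
      Polynomial.eval_add, Polynomial.eval_X, eq_ratCast]
    push_cast
    congr 1
    exact Finset.prod_congr rfl fun j _ => by ring
  have hevalR : Polynomial.eval x ((∑ i ∈ Finset.Icc 1 s, ∑ k ∈ range (n+1),
          C (a i k) * (X + C ((k:ℚ)))^(s+1-i) *
            (∏ j ∈ (range (n+1)).erase k, (X + C ((j:ℚ))))^(s+1) : Polynomial ℚ).map (algebraMap ℚ ℝ))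
      = (∑ i ∈ Finset.Icc 1 s, ∑ k ∈ range (n+1), (a i k : ℝ) / (x + k) ^ i) *
          (∏ j ∈ range (n+1), (x + (j:ℝ)))^(s+1) := by
    simp only [Polynomial.map_sum, Polynomial.map_mul, Polynomial.map_pow, Polynomial.map_add,
      Polynomial.map_C, Polynomial.map_X, Polynomial.map_prod, Polynomial.eval_finset_sum,
      Polynomial.eval_mul, Polynomial.eval_pow, Polynomial.eval_add, Polynomial.eval_X,
      Polynomial.eval_C, Polynomial.eval_prod, eq_ratCast]
    rw [Finset.sum_mul]
    refine Finset.sum_congr rfl fun i hi => ?_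
    rw [Finset.sum_mul]
    refine Finset.sum_congr rfl fun k hk => ?_
    have hxk : x + (k:ℝ) ≠ 0 := hden1 k hk
    have hsplit : (∏ j ∈ range (n+1), (x + (j:ℝ)))
        = (x + (k:ℝ)) * ∏ j ∈ (range (n+1)).erase k, (x + (j:ℝ)) :=
      (Finset.mul_prod_erase _ _ hk).symm
    have his : i ≤ s := (Finset.mem_Icc.mp hi).2
    push_cast
    rw [hsplit, mul_pow, show s+1 = i + (s+1-i) by omega, pow_add]
    field_simp
    rw [show i + (s + 1 - i) - i = s + 1 - i by omega]
    ring
  rw [hevalL, hevalR]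
  exact hmain

end Transfer


section Assembly

lemma NP (n k : ℕ) :
    ((∏ j ∈ (range (n+1)).erase k, (X + C ((j:ℚ)-(k:ℚ))) : Polynomial ℚ) : PowerSeries ℚ)
      * ∏ j ∈ (range (n+1)).erase k, inv1 ((j:ℚ)-(k:ℚ))
    = PowerSeries.C (∏ j ∈ (range (n+1)).erase k, ((j:ℚ)-(k:ℚ))) := by
  rw [coe_prod_ps, ← Finset.prod_mul_distrib,
    Finset.prod_congr rfl fun j hj => inv1_mul_X_add _ (cast_sub_ne (Finset.mem_erase.mp hj).1),
    ← map_prod]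

lemma coeff_TK (s n k : ℕ) (hn : 0 < n) (hk : k ∈ range (n+1)) (a : ℕ → ℕ → ℚ)
    (i : ℕ) (hi : i ∈ Finset.Icc 1 s) :
    PowerSeries.coeff (s+1-i)
      ((PowerSeries.C ((∏ j ∈ (range (n+1)).erase k, ((j:ℚ)-(k:ℚ)))⁻¹))^(s+1)
        * ((Polynomial.aeval (X - Polynomial.C (k:ℚ))
            (∑ i' ∈ Finset.Icc 1 s, ∑ k' ∈ range (n+1),
              C (a i' k') * (X + C ((k':ℚ)))^(s+1-i') *
                (∏ j ∈ (range (n+1)).erase k', (X + C ((j:ℚ))))^(s+1)) : Polynomial ℚ) : PowerSeries ℚ)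
        * (∏ j ∈ (range (n+1)).erase k, inv1 ((j:ℚ)-(k:ℚ)))^(s+1))
      = a i k := by
  classical
  obtain ⟨hi1, his⟩ := Finset.mem_Icc.mp hi
  have hγne : (∏ j ∈ (range (n+1)).erase k, ((j:ℚ)-(k:ℚ))) ≠ 0 :=
    Finset.prod_ne_zero_iff.mpr fun j hj => cast_sub_ne (Finset.mem_erase.mp hj).1
  set m := s + 1 - i with hm
  have hmle : m ≤ s := by omega
  -- push the shift through
  have hphi : (Polynomial.aeval (X - Polynomial.C (k:ℚ))
            (∑ i' ∈ Finset.Icc 1 s, ∑ k' ∈ range (n+1),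
              C (a i' k') * (X + C ((k':ℚ)))^(s+1-i') *
                (∏ j ∈ (range (n+1)).erase k', (X + C ((j:ℚ))))^(s+1)) : Polynomial ℚ)
      = ∑ i' ∈ Finset.Icc 1 s, ∑ k' ∈ range (n+1),
          C (a i' k') * (X + C ((k':ℚ) - (k:ℚ)))^(s+1-i') *
            (∏ j ∈ (range (n+1)).erase k', (X + C ((j:ℚ) - (k:ℚ))))^(s+1) := by
    rw [map_sum]
    refine Finset.sum_congr rfl fun i' _ => ?_
    rw [map_sum]
    refine Finset.sum_congr rfl fun k' _ => ?_
    rw [map_mul, map_mul, map_pow, map_pow, map_prod]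
    have hXC : ∀ c : ℚ, (Polynomial.aeval (X - Polynomial.C (k:ℚ)) (X + C c) : Polynomial ℚ)
        = X + C (c - (k:ℚ)) := by
      intro c
      rw [map_add, Polynomial.aeval_X, Polynomial.aeval_C, Polynomial.algebraMap_eq,
        Polynomial.C_sub]
      ring
    rw [hXC, Polynomial.aeval_C, Polynomial.algebraMap_eq]
    congr 1
    exact congrArg (· ^ (s+1)) (Finset.prod_congr rfl fun j _ => hXC _)
  rw [hphi]
  -- distribute
  have hT : (PowerSeries.C ((∏ j ∈ (range (n+1)).erase k, ((j:ℚ)-(k:ℚ)))⁻¹))^(s+1)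
        * ((∑ i' ∈ Finset.Icc 1 s, ∑ k' ∈ range (n+1),
          C (a i' k') * (X + C ((k':ℚ) - (k:ℚ)))^(s+1-i') *
            (∏ j ∈ (range (n+1)).erase k', (X + C ((j:ℚ) - (k:ℚ))))^(s+1) : Polynomial ℚ) : PowerSeries ℚ)
        * (∏ j ∈ (range (n+1)).erase k, inv1 ((j:ℚ)-(k:ℚ)))^(s+1)
      = ∑ i' ∈ Finset.Icc 1 s, ∑ k' ∈ range (n+1),
          (PowerSeries.C ((∏ j ∈ (range (n+1)).erase k, ((j:ℚ)-(k:ℚ)))⁻¹))^(s+1)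
          * ((C (a i' k') * (X + C ((k':ℚ) - (k:ℚ)))^(s+1-i') *
              (∏ j ∈ (range (n+1)).erase k', (X + C ((j:ℚ) - (k:ℚ))))^(s+1) : Polynomial ℚ) : PowerSeries ℚ)
          * (∏ j ∈ (range (n+1)).erase k, inv1 ((j:ℚ)-(k:ℚ)))^(s+1) := by
    rw [coe_sum_ps, Finset.mul_sum, Finset.sum_mul]
    refine Finset.sum_congr rfl fun i' _ => ?_
    rw [coe_sum_ps, Finset.mul_sum, Finset.sum_mul]
  rw [hT, map_sum]
  have hinner : ∀ i' ∈ Finset.Icc 1 s,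
      (PowerSeries.coeff m) (∑ k' ∈ range (n+1),
          (PowerSeries.C ((∏ j ∈ (range (n+1)).erase k, ((j:ℚ)-(k:ℚ)))⁻¹))^(s+1)
          * ((C (a i' k') * (X + C ((k':ℚ) - (k:ℚ)))^(s+1-i') *
              (∏ j ∈ (range (n+1)).erase k', (X + C ((j:ℚ) - (k:ℚ))))^(s+1) : Polynomial ℚ) : PowerSeries ℚ)
          * (∏ j ∈ (range (n+1)).erase k, inv1 ((j:ℚ)-(k:ℚ)))^(s+1))
      = (if s+1-i' = m then a i' k else 0) := by
    intro i' _
    rw [map_sum, Finset.sum_eq_single k]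
    · -- the k' = k term
      have h0 : ((k:ℚ) - (k:ℚ)) = 0 := by ring
      rw [h0]
      have hXX : (X + C (0:ℚ) : Polynomial ℚ) = X := by simp
      rw [hXX]
      have hps : ((C (a i' k) * X^(s+1-i') *
              (∏ j ∈ (range (n+1)).erase k, (X + C ((j:ℚ) - (k:ℚ))))^(s+1) : Polynomial ℚ)
            : PowerSeries ℚ)
          = PowerSeries.C (a i' k) * (PowerSeries.X)^(s+1-i')
            * (((∏ j ∈ (range (n+1)).erase k, (X + C ((j:ℚ) - (k:ℚ))) : Polynomial ℚ)
              : PowerSeries ℚ))^(s+1) := by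
        rw [Polynomial.coe_mul, Polynomial.coe_mul, Polynomial.coe_C, Polynomial.coe_pow,
          Polynomial.coe_pow, Polynomial.coe_X]
      rw [hps]
      have hgrp : (PowerSeries.C ((∏ j ∈ (range (n+1)).erase k, ((j:ℚ)-(k:ℚ)))⁻¹))^(s+1)
          * (PowerSeries.C (a i' k) * (PowerSeries.X)^(s+1-i')
            * (((∏ j ∈ (range (n+1)).erase k, (X + C ((j:ℚ) - (k:ℚ))) : Polynomial ℚ)
              : PowerSeries ℚ))^(s+1))
          * (∏ j ∈ (range (n+1)).erase k, inv1 ((j:ℚ)-(k:ℚ)))^(s+1)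
        = PowerSeries.C (a i' k) * (PowerSeries.X)^(s+1-i')
          * ((((∏ j ∈ (range (n+1)).erase k, (X + C ((j:ℚ) - (k:ℚ))) : Polynomial ℚ)
              : PowerSeries ℚ) * ∏ j ∈ (range (n+1)).erase k, inv1 ((j:ℚ)-(k:ℚ)))^(s+1)
            * (PowerSeries.C ((∏ j ∈ (range (n+1)).erase k, ((j:ℚ)-(k:ℚ)))⁻¹))^(s+1)) := by
        rw [mul_pow]
        ring
      rw [hgrp, NP, ← mul_pow, ← map_mul, mul_inv_cancel₀ hγne, map_one, one_pow, mul_one]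
      rw [PowerSeries.coeff_C_mul, PowerSeries.coeff_X_pow]
      by_cases hcase : s+1-i' = m
      · rw [if_pos hcase.symm, if_pos hcase, mul_one]
      · rw [if_neg (fun hc => hcase hc.symm), if_neg hcase, mul_zero]
    · -- the k' ≠ k terms vanish
      intro k' hk' hkne
      have hkmem : k ∈ (range (n+1)).erase k' := by
        rw [Finset.mem_erase]
        exact ⟨fun hc => hkne hc.symm, hk⟩
      have hfac : (∏ j ∈ (range (n+1)).erase k', (X + C ((j:ℚ) - (k:ℚ))) : Polynomial ℚ)
          = X * ∏ j ∈ ((range (n+1)).erase k').erase k, (X + C ((j:ℚ) - (k:ℚ))) := by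
        rw [← Finset.mul_prod_erase _ _ hkmem]
        congr 1
        simp
      have hdvd : (PowerSeries.X : PowerSeries ℚ)^(s+1) ∣
          (PowerSeries.C ((∏ j ∈ (range (n+1)).erase k, ((j:ℚ)-(k:ℚ)))⁻¹))^(s+1)
          * ((C (a i' k') * (X + C ((k':ℚ) - (k:ℚ)))^(s+1-i') *
              (∏ j ∈ (range (n+1)).erase k', (X + C ((j:ℚ) - (k:ℚ))))^(s+1) : Polynomial ℚ)
            : PowerSeries ℚ)
          * (∏ j ∈ (range (n+1)).erase k, inv1 ((j:ℚ)-(k:ℚ)))^(s+1) := by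
        refine ⟨(PowerSeries.C ((∏ j ∈ (range (n+1)).erase k, ((j:ℚ)-(k:ℚ)))⁻¹))^(s+1)
          * (((C (a i' k') * (X + C ((k':ℚ) - (k:ℚ)))^(s+1-i') : Polynomial ℚ) : PowerSeries ℚ)
            * (((∏ j ∈ ((range (n+1)).erase k').erase k, (X + C ((j:ℚ) - (k:ℚ))) : Polynomial ℚ)
              : PowerSeries ℚ))^(s+1))
          * (∏ j ∈ (range (n+1)).erase k, inv1 ((j:ℚ)-(k:ℚ)))^(s+1), ?_⟩
        rw [hfac]
        simp only [Polynomial.coe_mul, Polynomial.coe_pow, Polynomial.coe_X, Polynomial.coe_C]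
        ring
      exact PowerSeries.X_pow_dvd_iff.mp hdvd m (by omega)
    · intro hcon
      exact absurd hk hcon
  rw [Finset.sum_congr rfl hinner, Finset.sum_eq_single i]
  · rw [if_pos rfl]
  · intro i' hi' hne
    have := Finset.mem_Icc.mp hi'
    rw [if_neg (by omega)]
  · intro hcon
    exact absurd hi hcon

end Assembly


section GoodTK

lemma good_TK (s D n k : ℕ) (hD : 0 < D) (hn : 0 < n) (hkn : k ≤ n) (hsD : 3*D ≤ s) :
    good n ((PowerSeries.C ((∏ j ∈ (range (n+1)).erase k, ((j:ℚ)-(k:ℚ)))⁻¹))^(s+1)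
      * ((Polynomial.aeval (X - Polynomial.C (k:ℚ))
          (C ((D:ℚ)^(3*D*n) * ((n ! : ℕ):ℚ)^(s+1-3*D)) *
            ∏ j ∈ range (3*D*n+1), (X + C ((j:ℚ)/(D:ℚ) - (n:ℚ)))) : Polynomial ℚ) : PowerSeries ℚ)
      * (∏ j ∈ (range (n+1)).erase k, inv1 ((j:ℚ)-(k:ℚ)))^(s+1)) := by
  classical
  rw [fact_identity s D n hD]
  have hγne : (∏ j ∈ (range (n+1)).erase k, ((j:ℚ)-(k:ℚ))) ≠ 0 :=
    Finset.prod_ne_zero_iff.mpr fun j hj => cast_sub_ne (Finset.mem_erase.mp hj).1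
  have hXC : ∀ c : ℚ, (Polynomial.aeval (X - Polynomial.C (k:ℚ)) (X + C c) : Polynomial ℚ)
      = X + C (c - (k:ℚ)) := by
    intro c
    rw [map_add, Polynomial.aeval_X, Polynomial.aeval_C, Polynomial.algebraMap_eq,
      Polynomial.C_sub]
    ring
  have hDXC : ∀ c : ℚ, (Polynomial.aeval (X - Polynomial.C (k:ℚ))
        (C (D:ℚ) * X + C c) : Polynomial ℚ)
      = C (D:ℚ) * X + C (c - (D:ℚ)*(k:ℚ)) := by
    intro c
    rw [map_add, map_mul, Polynomial.aeval_X, Polynomial.aeval_C, Polynomial.aeval_C,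
      Polynomial.algebraMap_eq, Polynomial.C_sub, Polynomial.C_mul]
    ring
  have hphi : (Polynomial.aeval (X - Polynomial.C (k:ℚ))
        (C (((n ! : ℕ):ℚ)^(s+1-3*D)) * (X + C (((2*n : ℕ):ℚ))) *
          ∏ b ∈ range (3*D), ∏ r ∈ range n,
            (C (D:ℚ) * X + C (((b*n+r : ℕ):ℚ) - ((D*n : ℕ):ℚ)))) : Polynomial ℚ)
      = C (((n ! : ℕ):ℚ)^(s+1-3*D)) * (X + C ((((2*n : ℕ):ℚ)) - (k:ℚ))) *
          ∏ b ∈ range (3*D), ∏ r ∈ range n,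
            (C (D:ℚ) * X + C ((((b*n+r : ℕ):ℚ) - ((D*n : ℕ):ℚ)) - (D:ℚ)*(k:ℚ))) := by
    rw [map_mul, map_mul, Polynomial.aeval_C, Polynomial.algebraMap_eq, hXC, map_prod]
    congr 1
    refine Finset.prod_congr rfl fun b _ => ?_
    rw [map_prod]
    exact Finset.prod_congr rfl fun r _ => hDXC _
  rw [hphi]
  have hcoe : ((C (((n ! : ℕ):ℚ)^(s+1-3*D)) * (X + C ((((2*n : ℕ):ℚ)) - (k:ℚ))) *
          ∏ b ∈ range (3*D), ∏ r ∈ range n,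
            (C (D:ℚ) * X + C ((((b*n+r : ℕ):ℚ) - ((D*n : ℕ):ℚ)) - (D:ℚ)*(k:ℚ))) : Polynomial ℚ)
        : PowerSeries ℚ)
      = (PowerSeries.C (((n ! : ℕ):ℚ)))^(s+1-3*D)
        * ((X + C ((((2*n : ℕ):ℚ)) - (k:ℚ)) : Polynomial ℚ) : PowerSeries ℚ)
        * ∏ b ∈ range (3*D), ((∏ r ∈ range n,
            (C (D:ℚ) * X + C ((((b*n+r : ℕ):ℚ) - ((D*n : ℕ):ℚ)) - (D:ℚ)*(k:ℚ))) : Polynomial ℚ)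
          : PowerSeries ℚ) := by
    rw [Polynomial.coe_mul, Polynomial.coe_mul, Polynomial.coe_C, coe_prod_ps, map_pow]
  rw [hcoe]
  obtain ⟨e, he⟩ : ∃ e, s+1-3*D = e := ⟨_, rfl⟩
  rw [he]
  have hrearr : (PowerSeries.C ((∏ j ∈ (range (n+1)).erase k, ((j:ℚ)-(k:ℚ)))⁻¹))^(s+1)
        * ((PowerSeries.C (((n ! : ℕ):ℚ)))^e
          * ((X + C ((((2*n : ℕ):ℚ)) - (k:ℚ)) : Polynomial ℚ) : PowerSeries ℚ)
          * ∏ b ∈ range (3*D), ((∏ r ∈ range n,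
              (C (D:ℚ) * X + C ((((b*n+r : ℕ):ℚ) - ((D*n : ℕ):ℚ)) - (D:ℚ)*(k:ℚ))) : Polynomial ℚ)
            : PowerSeries ℚ))
        * (∏ j ∈ (range (n+1)).erase k, inv1 ((j:ℚ)-(k:ℚ)))^(s+1)
      = ((PowerSeries.C (((n ! : ℕ):ℚ)) * PowerSeries.C ((∏ j ∈ (range (n+1)).erase k, ((j:ℚ)-(k:ℚ)))⁻¹))
            * (∏ j ∈ (range (n+1)).erase k, inv1 ((j:ℚ)-(k:ℚ))))^e
        * ((X + C ((((2*n : ℕ):ℚ)) - (k:ℚ)) : Polynomial ℚ) : PowerSeries ℚ)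
        * ∏ b ∈ range (3*D),
            ((PowerSeries.C ((∏ j ∈ (range (n+1)).erase k, ((j:ℚ)-(k:ℚ)))⁻¹)
              * ((∏ r ∈ range n,
                  (C (D:ℚ) * X + C ((((b*n+r : ℕ):ℚ) - ((D*n : ℕ):ℚ)) - (D:ℚ)*(k:ℚ))) : Polynomial ℚ)
                : PowerSeries ℚ))
              * (∏ j ∈ (range (n+1)).erase k, inv1 ((j:ℚ)-(k:ℚ)))) := by
    simp only [Finset.prod_mul_distrib, Finset.prod_const, Finset.card_range]
    rw [show s+1 = e + 3*D by omega, pow_add, pow_add]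
    ring
  rw [hrearr]
  refine (good.mul (good.mul ((?_ : good n _).pow _) ?_) (good.prod _ _ fun b _ => ?_))
  · -- the factorial brick
    have hγval : (∏ j ∈ (range (n+1)).erase k, ((j:ℚ)-(k:ℚ)))
        = ((((-1:ℤ)^k * (k ! : ℤ) * (((n-k) ! : ℕ):ℤ)) : ℤ) : ℚ) := by
      calc ∏ j ∈ (range (n+1)).erase k, ((j:ℚ)-(k:ℚ))
          = ((∏ j ∈ (range (n+1)).erase k, ((j:ℤ)-(k:ℤ)) : ℤ) : ℚ) := by push_cast; rfl
        _ = _ := by rw [CL1 n k hkn]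
    have hch : (n.choose k : ℤ) * (k ! : ℤ) * (((n-k) ! : ℕ):ℤ) = (n ! : ℤ) := by
      exact_mod_cast Nat.choose_mul_factorial_mul_factorial hkn
    have hsq : ((-1:ℤ)^k) * ((-1:ℤ)^k) = 1 := by rw [← mul_pow]; norm_num
    have hzg : ((((-1:ℤ)^k * (n.choose k : ℤ)) : ℤ) : ℚ)
          * (∏ j ∈ (range (n+1)).erase k, ((j:ℚ)-(k:ℚ))) = ((n ! : ℕ):ℚ) := by
      rw [hγval]
      have hint : ((-1:ℤ)^k * (n.choose k : ℤ))
          * ((-1:ℤ)^k * (k ! : ℤ) * (((n-k) ! : ℕ):ℤ)) = (n ! : ℤ) := by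
        calc ((-1:ℤ)^k * (n.choose k : ℤ)) * ((-1:ℤ)^k * (k ! : ℤ) * (((n-k) ! : ℕ):ℤ))
            = ((n.choose k : ℤ) * (k ! : ℤ) * (((n-k) ! : ℕ):ℤ))
              * (((-1:ℤ)^k) * ((-1:ℤ)^k)) := by ring
          _ = _ := by rw [hsq, hch, mul_one]
      exact_mod_cast hint
    have hz : PowerSeries.C (((n ! : ℕ):ℚ))
          * PowerSeries.C ((∏ j ∈ (range (n+1)).erase k, ((j:ℚ)-(k:ℚ)))⁻¹)
        = PowerSeries.C ((((-1:ℤ)^k * (n.choose k : ℤ) : ℤ)) : ℚ) := by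
      rw [← map_mul]
      congr 1
      rw [← hzg, mul_assoc, mul_inv_cancel₀ hγne, mul_one]
    rw [hz]
    exact (good.C _).mul (good.prod _ _ fun j hj => by
      have hjk := (mem_Jset.mp hj).1
      have hjn := (mem_Jset.mp hj).2
      rw [show ((j:ℚ) - (k:ℚ)) = (((j:ℤ) - (k:ℤ) : ℤ) : ℚ) by push_cast; ring]
      exact good_inv1 _ (by omega) (dvd_dd hjn hkn hjk))
  · -- the linear brick
    have hS : (X + C ((((2*n : ℕ):ℚ)) - (k:ℚ)) : Polynomial ℚ)
        = ((X + C (((2*n : ℕ):ℤ) - (k:ℤ)) : Polynomial ℤ).map (Int.castRingHom ℚ)) := by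
      rw [Polynomial.map_add, Polynomial.map_X, Polynomial.map_C, eq_intCast]
      congr 1
      push_cast
      ring
    rw [hS]
    exact good.intPoly _
  · -- the block bricks, via lemmaA
    have hQ : ((∏ r ∈ range n,
          (C (D:ℚ) * X + C ((((b*n+r : ℕ):ℚ) - ((D*n : ℕ):ℚ)) - (D:ℚ)*(k:ℚ))) : Polynomial ℚ))
        = ((∏ r ∈ range n,
            (C (D:ℤ) * X + C ((((b*n+r : ℕ):ℤ) - ((D*n : ℕ):ℤ)) - ((D:ℕ):ℤ)*(k:ℤ))) : Polynomial ℤ).map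
          (Int.castRingHom ℚ)) := by
      rw [Polynomial.map_prod]
      refine Finset.prod_congr rfl fun r _ => ?_
      rw [Polynomial.map_add, Polynomial.map_mul, Polynomial.map_X, Polynomial.map_C,
        Polynomial.map_C, eq_intCast, eq_intCast]
      push_cast
      ring
    rw [hQ]
    refine lemmaA n k hn hkn _ ?_
    intro j hj
    rw [Polynomial.eval_prod]
    have hev : ∀ r ∈ range n,
        ((C (D:ℤ) * X + C ((((b*n+r : ℕ):ℤ) - ((D*n : ℕ):ℤ)) - ((D:ℕ):ℤ)*(k:ℤ))).eval ((k:ℤ) - (j:ℤ)))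
          = (((b*n : ℕ):ℤ) - ((D*n : ℕ):ℤ) - ((D:ℕ):ℤ)*(j:ℤ)) + (r:ℤ) := by
      intro r _
      simp only [Polynomial.eval_add, Polynomial.eval_mul, Polynomial.eval_X, Polynomial.eval_C]
      push_cast
      ring
    rw [Finset.prod_congr rfl hev]
    exact factorial_dvd_consec n _

end GoodTK

end

end FSZ

theorem stmt4 (s D n : ℕ) (hs : Odd s) (hD : 0 < D) (hn : 0 < n) (hsD : 3 * D ≤ s)
    (hDn : Even (D * n)) (a : ℕ → ℕ → ℚ)
    (ha : ∀ t : ℝ, (∀ k : ℕ, k ≤ n → t ≠ -(k : ℝ)) →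
      R s D n t = ∑ i ∈ Finset.Icc 1 s, ∑ k ∈ Finset.range (n + 1), (a i k : ℝ) / (t + k) ^ i)
    (i : ℕ) (hi3 : 3 ≤ i) (his : i ≤ s) :
    ∃ z : ℤ, (dd n : ℚ) ^ (s + 1 - i) * ∑ k ∈ Finset.range (n + 1), a i k = (z : ℚ) := by
  classical
  have hmainid := FSZ.main_identity s D n hD hn a ha
  have hikey : ∀ k ∈ Finset.range (n+1), ∃ z : ℤ, (dd n : ℚ)^(s+1-i) * a i k = (z:ℚ) := by
    intro k hk
    have hkn : k ≤ n := by
      have := Finset.mem_range.mp hk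
      omega
    have hgood := FSZ.good_TK s D n k hD hn hkn hsD
    rw [hmainid] at hgood
    obtain ⟨z, hz⟩ := hgood (s+1-i)
    refine ⟨z, ?_⟩
    rw [← FSZ.coeff_TK s n k hn hk a i (Finset.mem_Icc.mpr ⟨by omega, his⟩)]
    exact hz
  have hint' : ∀ k : ℕ, ∃ z : ℤ, (k ∈ Finset.range (n+1) →
      (dd n : ℚ)^(s+1-i) * a i k = (z:ℚ)) := by
    intro k
    by_cases hk : k ∈ Finset.range (n+1)
    · obtain ⟨z, hz⟩ := hikey k hk
      exact ⟨z, fun _ => hz⟩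
    · exact ⟨0, fun h => absurd h hk⟩
  choose z hz using hint'
  refine ⟨∑ k ∈ Finset.range (n+1), z k, ?_⟩
  rw [Finset.mul_sum]
  push_cast
  exact Finset.sum_congr rfl fun k hk => hz k hk
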